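/- Let S and T be C-semigroups that are P-semigroups, with T covering S in the sense T = S ∪ {Fb(S)}, S ≠ C. Then S = T \ {a} where a = Fb(S) is a minimal generator of T with a ≻ Fb(T). Conversely, if a ∈ msg(T) satisfies a ≻ Fb(T) and T \ {a} is a P-semigroup, then T = (T \ {a}) ∪ {Fb(T \ {a})} and Fb(T \ {a}) = a. -/
import Mathlib


/-- A monomial order on `ℕ^d`: a total order compatible with addition,
with `0` as least element. -/
def IsMonomialOrder (d : ℕ) (le : (Fin d → ℕ) → (Fin d → ℕ) → Prop) : Prop :=
  (∀ a, le a a) ∧ (∀ a b, le a b → le b a → a = b) ∧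
  (∀ a b c, le a b → le b c → le a c) ∧ (∀ a b, le a b ∨ le b a) ∧
  (∀ a b c, le a b → le (a + c) (b + c)) ∧ (∀ a, le 0 a)

/-- `S` is a `C`-semigroup: a submonoid of the cone `C` with finite complement in `C`. -/
def IsCSgp {d : ℕ} (C : AddSubmonoid (Fin d → ℕ)) (S : Set (Fin d → ℕ)) : Prop :=
  0 ∈ S ∧ (∀ x ∈ S, ∀ y ∈ S, x + y ∈ S) ∧ S ⊆ (C : Set (Fin d → ℕ)) ∧
    ((C : Set (Fin d → ℕ)) \ S).Finite

/-- `S` is a `P`-semigroup: for every nonzero `s ∈ S` there is `p ∈ P` with `s + p ∈ S`. -/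
def IsPSgp {d : ℕ} (P : Set (Fin d → ℕ)) (S : Set (Fin d → ℕ)) : Prop :=
  ∀ s ∈ S, s ≠ 0 → ∃ p ∈ P, s + p ∈ S

/-- `a` is a minimal generator of `S`. -/
def IsMinGen {d : ℕ} (S : Set (Fin d → ℕ)) (a : Fin d → ℕ) : Prop :=
  a ∈ S ∧ a ≠ 0 ∧ ¬ ∃ x ∈ S, ∃ y ∈ S, x ≠ 0 ∧ y ≠ 0 ∧ a = x + y

/-- Any nonempty finite subset of a totally (pre)ordered type has a maximum. -/
lemma exists_max_finset {α : Type*} (le : α → α → Prop)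
    (hrefl : ∀ a, le a a) (htrans : ∀ a b c, le a b → le b c → le a c)
    (htot : ∀ a b, le a b ∨ le b a) (s : Finset α) :
    s.Nonempty → ∃ g ∈ s, ∀ x ∈ s, le x g := by
  classical
  induction s using Finset.induction_on with
  | empty => intro hs; simp at hs
  | @insert a s ha ih =>
    intro _
    rcases s.eq_empty_or_nonempty with rfl | hs
    · exact ⟨a, Finset.mem_insert_self a _, by simpa using hrefl a⟩
    · obtain ⟨g, hg, hmax⟩ := ih hs
      rcases htot a g with h | h
      · refine ⟨g, Finset.mem_insert_of_mem hg, ?_⟩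
        intro x hx
        rcases Finset.mem_insert.mp hx with rfl | hx
        · exact h
        · exact hmax x hx
      · refine ⟨a, Finset.mem_insert_self a _, ?_⟩
        intro x hx
        rcases Finset.mem_insert.mp hx with rfl | hx
        · exact hrefl _
        · exact htrans x g _ (hmax x hx) h

lemma exists_max_set {α : Type*} (le : α → α → Prop)
    (hrefl : ∀ a, le a a) (htrans : ∀ a b c, le a b → le b c → le a c)
    (htot : ∀ a b, le a b ∨ le b a) {s : Set α} (hfin : s.Finite)
    (hne : s.Nonempty) : ∃ g ∈ s, ∀ x ∈ s, le x g := by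
  obtain ⟨g, hg, hmax⟩ := exists_max_finset le hrefl htrans htot hfin.toFinset
    (by simpa [Set.Finite.toFinset] using hne)
  exact ⟨g, hfin.mem_toFinset.mp hg, fun x hx => hmax x (hfin.mem_toFinset.mpr hx)⟩

theorem stmt_14 {d : ℕ} (C : AddSubmonoid (Fin d → ℕ)) (hCfg : C.FG)
    (P : Set (Fin d → ℕ)) (hPfin : P.Finite) (hP0 : (0 : Fin d → ℕ) ∉ P)
    (le : (Fin d → ℕ) → (Fin d → ℕ) → Prop) (hle : IsMonomialOrder d le) :
    (∀ S T : Set (Fin d → ℕ), ∀ Fb : Fin d → ℕ,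
      IsCSgp C S → IsPSgp P S → IsCSgp C T → IsPSgp P T →
      S ≠ (C : Set (Fin d → ℕ)) →
      Fb ∈ (C : Set (Fin d → ℕ)) \ S →
      (∀ x ∈ (C : Set (Fin d → ℕ)) \ S, le x Fb) →
      T = insert Fb S →
        S = T \ {Fb} ∧ IsMinGen T Fb ∧
          ∀ g ∈ (C : Set (Fin d → ℕ)) \ T,
            (∀ x ∈ (C : Set (Fin d → ℕ)) \ T, le x g) → le g Fb ∧ g ≠ Fb) ∧
    (∀ T : Set (Fin d → ℕ), ∀ a : Fin d → ℕ,
      IsCSgp C T → IsPSgp P T → IsMinGen T a →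
      (∀ g ∈ (C : Set (Fin d → ℕ)) \ T,
        (∀ x ∈ (C : Set (Fin d → ℕ)) \ T, le x g) → le g a ∧ g ≠ a) →
      IsPSgp P (T \ {a}) →
        a ∈ (C : Set (Fin d → ℕ)) \ (T \ {a}) ∧
        (∀ x ∈ (C : Set (Fin d → ℕ)) \ (T \ {a}), le x a) ∧
        T = insert a (T \ {a})) := by
  obtain ⟨hrefl, hanti, htrans, htot, hadd, hzero⟩ := hle
  constructor
  · rintro S T Fb hS hPS hT hPT hSneC ⟨hFbC, hFbS⟩ hmax rfl
    refine ⟨?_, ⟨Set.mem_insert _ _, ?_, ?_⟩, ?_⟩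
    · ext x
      simp only [Set.mem_diff, Set.mem_insert_iff, Set.mem_singleton_iff]
      constructor
      · intro hx
        exact ⟨Or.inr hx, fun h => hFbS (h ▸ hx)⟩
      · rintro ⟨h1 | h2, hne⟩
        · exact absurd h1 hne
        · exact h2
    · intro h
      exact hFbS (h ▸ hS.1)
    · rintro ⟨x, hx, y, hy, hxne, hyne, hxy⟩
      rcases Set.mem_insert_iff.mp hx with rfl | hx
      · apply hyne
        funext i
        have h := congrFun hxy i
        simp only [Pi.add_apply] at h
        simp only [Pi.zero_apply]
        omega
      · rcases Set.mem_insert_iff.mp hy with rfl | hy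
        · apply hxne
          funext i
          have h := congrFun hxy i
          simp only [Pi.add_apply] at h
          simp only [Pi.zero_apply]
          omega
        · exact hFbS (hxy ▸ hS.2.1 x hx y hy)
    · rintro g ⟨hgC, hgT⟩ _
      refine ⟨hmax g ⟨hgC, fun hg => hgT (Set.mem_insert_of_mem _ hg)⟩, ?_⟩
      intro h
      exact hgT (h ▸ Set.mem_insert _ _)
  · rintro T a hT hPT ⟨haT, hane, _⟩ hFbcond hPTa
    have haC : a ∈ (C : Set (Fin d → ℕ)) := hT.2.2.1 haT
    refine ⟨⟨haC, fun h => h.2 rfl⟩, ?_, ?_⟩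
    · rintro x ⟨hxC, hx⟩
      by_cases hxT : x ∈ T
      · have : x = a := by
          by_contra hne
          exact hx ⟨hxT, hne⟩
        exact this ▸ hrefl a
      · -- x ∈ C \ T, which is finite and nonempty, has a max g; le x g and le g a
        have hne' : ((C : Set (Fin d → ℕ)) \ T).Nonempty := ⟨x, hxC, hxT⟩
        obtain ⟨g, hg, hgmax⟩ := exists_max_set le hrefl htrans htot hT.2.2.2 hne'
        have := hFbcond g hg hgmax
        exact htrans x g a (hgmax x ⟨hxC, hxT⟩) this.1
    · rw [Set.insert_diff_singleton, Set.insert_eq_self.mpr haT]
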